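/- Consider the autonomous two-dimensional system ẋ(t) = −a_1 x(t − τ_1) + a_12 f_1(y(t − σ_1)), ẏ(t) = −a_2 y(t − τ_2) + a_21 f_2(x(t − σ_2)), where a_i > 0, a_12, a_21 > 0, τ_i ≥ 0, σ_i ≥ 0, and |f_i(u)| ≤ L_i|u| with f_i continuous, i = 1,2. If a_1τ_1 < 1, a_2τ_2 < 1, and (1 − a_1τ_1)(1 − a_2τ_2)/((1 + a_1τ_1)(1 + a_2τ_2)) > a_12 a_21 L_1 L_2/(a_1 a_2), then the system is globally exponentially stable. -/

import Mathlib

open MeasureTheory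

open MeasureTheory Set Filter Topology intervalIntegral

lemma deriv_nonneg_of_max_left {g : ℝ → ℝ} {T d a : ℝ} (hd : HasDerivAt g d T)
    (haT : a < T) (h : ∀ s, a ≤ s → s ≤ T → g s ≤ g T) : 0 ≤ d := by
  have hslope : Tendsto (slope g T) (𝓝[<] T) (𝓝 d) :=
    (hasDerivAt_iff_tendsto_slope.mp hd).mono_left
      (nhdsWithin_mono _ (fun s hs => ne_of_lt hs))
  refine ge_of_tendsto hslope ?_
  filter_upwards [Ioo_mem_nhdsLT_of_mem ⟨haT, le_refl T⟩] with s hs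
  have h1 : g s ≤ g T := h s hs.1.le hs.2.le
  have h2 : s - T < 0 := sub_neg.mpr hs.2
  rw [slope_def_field]
  exact div_nonneg_of_nonpos (by linarith) h2.le

lemma hasDerivAt_of_integral_eq {x F : ℝ → ℝ} {t₀ T : ℝ} (hT : t₀ < T) (hF : Continuous F)
    (hx : ∀ t, t₀ ≤ t → x t = x t₀ + ∫ s in t₀..t, F s) : HasDerivAt x (F T) T := by
  have h1 : HasDerivAt (fun t => x t₀ + ∫ s in t₀..t, F s) (F T) T := by
    have := intervalIntegral.integral_hasDerivAt_right (hF.intervalIntegrable t₀ T)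
      (hF.stronglyMeasurableAtFilter _ _) hF.continuousAt
    simpa using this.const_add (x t₀)
  refine h1.congr_of_eventuallyEq ?_
  filter_upwards [eventually_gt_nhds hT] with s hs
  exact hx s hs.le

lemma auxKey
    (a A τ σ L p q lam D ε t₀ T : ℝ)
    (x y f : ℝ → ℝ)
    (ha : 0 < a) (hτ : 0 ≤ τ) (hσ : 0 ≤ σ) (hL : 0 ≤ L)
    (hp : 0 < p) (hq : 0 < q) (hlam : 0 < lam) (hDε : 0 < D + ε)
    (hA : 0 < A)
    (hf : ∀ u, |f u| ≤ L * |u|)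
    (hcx : Continuous x) (hcy : Continuous y) (hcf : Continuous f)
    (hT : t₀ + τ < T)
    (hint : ∀ t, t₀ ≤ t → x t = x t₀ + ∫ s in t₀..t, (-a * x (s - τ) + A * f (y (s - σ))))
    (hbx : ∀ s, t₀ - max τ σ ≤ s → s ≤ T → |x s| ≤ p * Real.exp (-(lam * (s - t₀))) * (D + ε))
    (hby : ∀ s, t₀ - max τ σ ≤ s → s ≤ T → |y s| ≤ q * Real.exp (-(lam * (s - t₀))) * (D + ε))
    (hxT : x T = p * Real.exp (-(lam * (T - t₀))) * (D + ε))
    (hφ : (lam - a) * p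
        + a * τ * (a * p * Real.exp (2 * lam * τ) + A * L * q * Real.exp (lam * (τ + σ)))
        + A * L * q * Real.exp (lam * σ) < 0) : False := by
  have hmτ : τ ≤ max τ σ := le_max_left τ σ
  have hmσ : σ ≤ max τ σ := le_max_right τ σ
  set F : ℝ → ℝ := fun s => -a * x (s - τ) + A * f (y (s - σ)) with hFdef
  have hFc : Continuous F := by
    apply Continuous.add
    · exact continuous_const.mul (hcx.comp (continuous_id.sub continuous_const))
    · exact continuous_const.mul (hcf.comp (hcy.comp (continuous_id.sub continuous_const)))
  have ht₀T : t₀ < T := by linarith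
  have hder : HasDerivAt x (F T) T := hasDerivAt_of_integral_eq ht₀T hFc hint
  set E : ℝ → ℝ := fun t => Real.exp (lam * (t - t₀)) with hEdef
  have hEder : ∀ t : ℝ, HasDerivAt E (lam * E t) t := by
    intro t
    have h1 : HasDerivAt (fun u : ℝ => lam * (u - t₀)) lam t := by
      simpa using ((hasDerivAt_id t).sub_const t₀).const_mul lam
    simpa [hEdef, mul_comm] using h1.exp
  set g : ℝ → ℝ := fun t => E t * x t with hgdef
  have hgder : HasDerivAt g (lam * E T * x T + E T * F T) T := (hEder T).mul hder
  have hEexp : ∀ t : ℝ, E t * Real.exp (-(lam * (t - t₀))) = 1 := by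
    intro t; rw [hEdef]; rw [← Real.exp_add]; simp
  have hExT : E T * x T = p * (D + ε) := by
    rw [hxT]
    calc E T * (p * Real.exp (-(lam * (T - t₀))) * (D + ε))
        = p * (D + ε) * (E T * Real.exp (-(lam * (T - t₀)))) := by ring
      _ = p * (D + ε) := by rw [hEexp T, mul_one]
  have hgT : g T = p * (D + ε) := hExT
  have hmax : ∀ s, t₀ ≤ s → s ≤ T → g s ≤ g T := by
    intro s h1 h2
    have hb := hbx s (by linarith) h2
    have h3 : g s ≤ E s * |x s| :=
      mul_le_mul_of_nonneg_left (le_abs_self _) (Real.exp_nonneg _)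
    refine le_trans h3 ?_
    rw [hgT]
    calc E s * |x s| ≤ E s * (p * Real.exp (-(lam * (s - t₀))) * (D + ε)) :=
          mul_le_mul_of_nonneg_left hb (Real.exp_nonneg _)
      _ = p * (D + ε) * (E s * Real.exp (-(lam * (s - t₀)))) := by ring
      _ = p * (D + ε) := by rw [hEexp s, mul_one]
  have hd0 : 0 ≤ lam * E T * x T + E T * F T :=
    deriv_nonneg_of_max_left hgder ht₀T hmax
  have hIsplit : x T - x (T - τ) = ∫ s in (T - τ)..T, F s := by
    have e1 := hint T ht₀T.le
    have e2 := hint (T - τ) (by linarith)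
    have i₁ : IntervalIntegrable F volume t₀ (T - τ) := hFc.intervalIntegrable _ _
    have i₂ : IntervalIntegrable F volume (T - τ) T := hFc.intervalIntegrable _ _
    have e3 := intervalIntegral.integral_add_adjacent_intervals i₁ i₂
    linarith
  set I : ℝ := ∫ s in (T - τ)..T, F s with hIdef
  set eT : ℝ := Real.exp (-(lam * (T - t₀))) with heT
  set C : ℝ := eT * (D + ε) *
      (a * p * Real.exp (2 * lam * τ) + A * L * q * Real.exp (lam * (τ + σ))) with hCdef
  have hI : |I| ≤ C * τ := by
    have hb : ∀ s ∈ Set.uIoc (T - τ) T, ‖F s‖ ≤ C := by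
      intro s hs
      rw [Set.uIoc_of_le (by linarith)] at hs
      obtain ⟨hs1, hs2⟩ := hs
      have hx1 : |x (s - τ)| ≤ p * Real.exp (-(lam * (s - τ - t₀))) * (D + ε) :=
        hbx _ (by linarith) (by linarith)
      have hy1 : |y (s - σ)| ≤ q * Real.exp (-(lam * (s - σ - t₀))) * (D + ε) :=
        hby _ (by linarith) (by linarith)
      have hkey : 0 ≤ lam * (s - (T - τ)) := mul_nonneg hlam.le (by linarith)
      have hex : Real.exp (-(lam * (s - τ - t₀))) ≤ eT * Real.exp (2 * lam * τ) := by
        rw [heT, ← Real.exp_add]; apply Real.exp_le_exp.mpr; linarith [hkey]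
      have hey : Real.exp (-(lam * (s - σ - t₀))) ≤ eT * Real.exp (lam * (τ + σ)) := by
        rw [heT, ← Real.exp_add]; apply Real.exp_le_exp.mpr; linarith [hkey]
      have hfv : |f (y (s - σ))| ≤ L * |y (s - σ)| := hf _
      have h1 : ‖F s‖ ≤ a * |x (s - τ)| + A * (L * |y (s - σ)|) := by
        simp only [hFdef]
        refine le_trans (abs_add_le _ _) ?_
        gcongr
        · rw [abs_mul, abs_neg, abs_of_pos ha]
        · rw [abs_mul, abs_of_pos hA]
          exact mul_le_mul_of_nonneg_left hfv hA.le
      have t1 : a * |x (s - τ)| ≤ a * p * (eT * Real.exp (2 * lam * τ)) * (D + ε) := by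
        calc a * |x (s - τ)| ≤ a * (p * Real.exp (-(lam * (s - τ - t₀))) * (D + ε)) :=
              mul_le_mul_of_nonneg_left hx1 ha.le
          _ ≤ a * (p * (eT * Real.exp (2 * lam * τ)) * (D + ε)) := by gcongr
          _ = a * p * (eT * Real.exp (2 * lam * τ)) * (D + ε) := by ring
      have t2 : A * (L * |y (s - σ)|) ≤
          A * L * q * (eT * Real.exp (lam * (τ + σ))) * (D + ε) := by
        calc A * (L * |y (s - σ)|)
            ≤ A * (L * (q * Real.exp (-(lam * (s - σ - t₀))) * (D + ε))) := by gcongr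
          _ ≤ A * (L * (q * (eT * Real.exp (lam * (τ + σ))) * (D + ε))) := by gcongr
          _ = A * L * q * (eT * Real.exp (lam * (τ + σ))) * (D + ε) := by ring
      rw [hCdef]
      linarith [le_trans h1 (add_le_add t1 t2)]
    have hn := intervalIntegral.norm_integral_le_of_norm_le_const hb
    rw [← hIdef] at hn
    have habs : |T - (T - τ)| = τ := by rw [show T - (T - τ) = τ by ring, abs_of_nonneg hτ]
    rw [habs] at hn
    calc |I| = ‖I‖ := (Real.norm_eq_abs I).symm
      _ ≤ C * τ := hn
  have hfT : |f (y (T - σ))| ≤ L * q * (eT * Real.exp (lam * σ)) * (D + ε) := by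
    have h2 : |y (T - σ)| ≤ q * Real.exp (-(lam * (T - σ - t₀))) * (D + ε) :=
      hby _ (by linarith) (by linarith)
    have hkey : 0 ≤ lam * σ := mul_nonneg hlam.le hσ
    have hey : Real.exp (-(lam * (T - σ - t₀))) ≤ eT * Real.exp (lam * σ) := by
      rw [heT, ← Real.exp_add]; apply Real.exp_le_exp.mpr; linarith [hkey]
    calc |f (y (T - σ))| ≤ L * |y (T - σ)| := hf _
      _ ≤ L * (q * Real.exp (-(lam * (T - σ - t₀))) * (D + ε)) := by gcongr
      _ ≤ L * (q * (eT * Real.exp (lam * σ)) * (D + ε)) := by gcongr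
      _ = L * q * (eT * Real.exp (lam * σ)) * (D + ε) := by ring
  have hFT : F T = -a * x T + a * I + A * f (y (T - σ)) := by
    have hxτ : x (T - τ) = x T - I := by rw [hIdef]; linarith [hIsplit]
    simp only [hFdef]
    rw [hxτ]; ring
  have hETpos : 0 < E T := Real.exp_pos _
  have hET1 : E T * eT = 1 := hEexp T
  have hd : lam * E T * x T + E T * F T
      = (lam - a) * (p * (D + ε)) + E T * (a * I + A * f (y (T - σ))) := by
    rw [hFT]
    have e1 : lam * E T * x T = lam * (E T * x T) := by ring
    have e2 : E T * (-a * x T + a * I + A * f (y (T - σ)))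
        = -a * (E T * x T) + E T * (a * I + A * f (y (T - σ))) := by ring
    rw [e1, e2, hExT]; ring
  have hbound : E T * (a * I + A * f (y (T - σ)))
      ≤ (D + ε) * (a * τ * (a * p * Real.exp (2 * lam * τ)
            + A * L * q * Real.exp (lam * (τ + σ)))
          + A * L * q * Real.exp (lam * σ)) := by
    have h1 : a * I + A * f (y (T - σ)) ≤ a * (C * τ)
        + A * (L * q * (eT * Real.exp (lam * σ)) * (D + ε)) := by
      have i1 : a * I ≤ a * (C * τ) :=
        le_trans (mul_le_mul_of_nonneg_left (le_abs_self I) ha.le)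
          (mul_le_mul_of_nonneg_left hI ha.le)
      have i2 : A * f (y (T - σ)) ≤ A * (L * q * (eT * Real.exp (lam * σ)) * (D + ε)) :=
        le_trans (mul_le_mul_of_nonneg_left (le_abs_self _) hA.le)
          (mul_le_mul_of_nonneg_left hfT hA.le)
      linarith
    have h3 := mul_le_mul_of_nonneg_left h1 hETpos.le
    refine le_trans h3 (le_of_eq ?_)
    rw [hCdef]
    have expand : E T * (a * (eT * (D + ε) *
        (a * p * Real.exp (2 * lam * τ) + A * L * q * Real.exp (lam * (τ + σ))) * τ)
        + A * (L * q * (eT * Real.exp (lam * σ)) * (D + ε)))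
        = (E T * eT) * ((D + ε) *
          (a * τ * (a * p * Real.exp (2 * lam * τ) + A * L * q * Real.exp (lam * (τ + σ)))
          + A * L * q * Real.exp (lam * σ))) := by ring
    rw [expand, hET1, one_mul]
  have hfin := mul_lt_mul_of_pos_right hφ hDε
  linarith [hd0, hd, hbound, hfin]


set_option maxHeartbeats 4000000

/-- The improvement of Gopalsamy's test: the autonomous system
`ẋ(t) = −a₁x(t−τ₁) + a₁₂f₁(y(t−σ₁))`, `ẏ(t) = −a₂y(t−τ₂) + a₂₁f₂(x(t−σ₂))`
is globally exponentially stable provided `a₁τ₁ < 1`, `a₂τ₂ < 1` and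
`(1−a₁τ₁)(1−a₂τ₂)/((1+a₁τ₁)(1+a₂τ₂)) > a₁₂a₂₁L₁L₂/(a₁a₂)`. -/
theorem stmt18
    (a₁ a₂ a₁₂ a₂₁ τ₁ τ₂ σ₁ σ₂ L₁ L₂ : ℝ)
    (f₁ f₂ : ℝ → ℝ)
    (ha₁ : 0 < a₁) (ha₂ : 0 < a₂) (ha₁₂ : 0 < a₁₂) (ha₂₁ : 0 < a₂₁)
    (hτ₁ : 0 ≤ τ₁) (hτ₂ : 0 ≤ τ₂) (hσ₁ : 0 ≤ σ₁) (hσ₂ : 0 ≤ σ₂)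
    (hf₁_cont : Continuous f₁) (hf₂_cont : Continuous f₂)
    (hf₁ : ∀ u, |f₁ u| ≤ L₁ * |u|) (hf₂ : ∀ u, |f₂ u| ≤ L₂ * |u|)
    (hsmall₁ : a₁ * τ₁ < 1) (hsmall₂ : a₂ * τ₂ < 1)
    (hcond : (1 - a₁ * τ₁) * (1 - a₂ * τ₂) / ((1 + a₁ * τ₁) * (1 + a₂ * τ₂)) >
      a₁₂ * a₂₁ * L₁ * L₂ / (a₁ * a₂)) :
    -- global exponential stability
    ∃ M Λ : ℝ, 0 < M ∧ 0 < Λ ∧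
      ∀ t₀ : ℝ, 0 ≤ t₀ → ∀ x y : ℝ → ℝ,
        Continuous x → Continuous y →
        (∀ t, t₀ ≤ t → IntervalIntegrable
            (fun s => -a₁ * x (s - τ₁) + a₁₂ * f₁ (y (s - σ₁))) volume t₀ t) →
        (∀ t, t₀ ≤ t → IntervalIntegrable
            (fun s => -a₂ * y (s - τ₂) + a₂₁ * f₂ (x (s - σ₂))) volume t₀ t) →
        (∀ t, t₀ ≤ t →
          x t = x t₀ + ∫ s in t₀..t, (-a₁ * x (s - τ₁) + a₁₂ * f₁ (y (s - σ₁)))) →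
        (∀ t, t₀ ≤ t →
          y t = y t₀ + ∫ s in t₀..t, (-a₂ * y (s - τ₂) + a₂₁ * f₂ (x (s - σ₂)))) →
        ∀ t, t₀ ≤ t →
          ‖(x t, y t)‖ ≤
            M * Real.exp (-Λ * (t - t₀)) *
              (‖(x t₀, y t₀)‖ +
                sSup ((fun s => ‖(x s, y s)‖) ''
                  Set.Icc (t₀ - max (max τ₁ τ₂) (max σ₁ σ₂)) t₀)) := by
  -- nonnegativity of the Lipschitz constants
  have hL₁ : 0 ≤ L₁ := by have h := hf₁ 1; have h2 := abs_nonneg (f₁ 1); simp at h; linarith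
  have hL₂ : 0 ≤ L₂ := by have h := hf₂ 1; have h2 := abs_nonneg (f₂ 1); simp at h; linarith
  have haτ₁ : 0 ≤ a₁ * τ₁ := mul_nonneg ha₁.le hτ₁
  have haτ₂ : 0 ≤ a₂ * τ₂ := mul_nonneg ha₂.le hτ₂
  -- the key algebraic condition
  have hβ : 0 < a₁ * (1 - a₁ * τ₁) := mul_pos ha₁ (by linarith)
  have hδ : 0 < a₂ * (1 - a₂ * τ₂) := mul_pos ha₂ (by linarith)
  have hα : 0 ≤ a₁₂ * L₁ * (1 + a₁ * τ₁) := mul_nonneg (mul_nonneg ha₁₂.le hL₁) (by linarith)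
  have hγ : 0 ≤ a₂₁ * L₂ * (1 + a₂ * τ₂) := mul_nonneg (mul_nonneg ha₂₁.le hL₂) (by linarith)
  have hkey : (a₁₂ * L₁ * (1 + a₁ * τ₁)) * (a₂₁ * L₂ * (1 + a₂ * τ₂)) <
      (a₁ * (1 - a₁ * τ₁)) * (a₂ * (1 - a₂ * τ₂)) := by
    have h1 : 0 < (1 + a₁ * τ₁) * (1 + a₂ * τ₂) := mul_pos (by linarith) (by linarith)
    have h2 : 0 < a₁ * a₂ := mul_pos ha₁ ha₂
    rw [gt_iff_lt, div_lt_div_iff₀ h2 h1] at hcond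
    nlinarith [hcond, haτ₁, haτ₂]
  -- choice of the weight p
  have hden : 0 < a₁ * (1 - a₁ * τ₁) + a₂₁ * L₂ * (1 + a₂ * τ₂) := by linarith
  set p : ℝ := ((a₁₂ * L₁ * (1 + a₁ * τ₁)) + a₂ * (1 - a₂ * τ₂)) /
      (a₁ * (1 - a₁ * τ₁) + a₂₁ * L₂ * (1 + a₂ * τ₂)) with hpdef
  have hp : 0 < p := div_pos (by linarith) hden
  have h1p : a₁₂ * L₁ * (1 + a₁ * τ₁) < p * (a₁ * (1 - a₁ * τ₁)) := by
    rw [hpdef, div_mul_eq_mul_div, lt_div_iff₀ hden]; linarith [hkey]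
  have h2p : p * (a₂₁ * L₂ * (1 + a₂ * τ₂)) < a₂ * (1 - a₂ * τ₂) := by
    rw [hpdef, div_mul_eq_mul_div, div_lt_iff₀ hden]; linarith [hkey]
  clear_value p
  clear hpdef
  -- choice of the decay rate lam
  set φA : ℝ → ℝ := fun l => (l - a₁) * p
      + a₁ * τ₁ * (a₁ * p * Real.exp (2 * l * τ₁) + a₁₂ * L₁ * 1 * Real.exp (l * (τ₁ + σ₁)))
      + a₁₂ * L₁ * 1 * Real.exp (l * σ₁) with hφAdef
  set φB : ℝ → ℝ := fun l => (l - a₂) * 1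
      + a₂ * τ₂ * (a₂ * 1 * Real.exp (2 * l * τ₂) + a₂₁ * L₂ * p * Real.exp (l * (τ₂ + σ₂)))
      + a₂₁ * L₂ * p * Real.exp (l * σ₂) with hφBdef
  have hφAcont : Continuous φA := by
    rw [hφAdef]; fun_prop
  have hφBcont : Continuous φB := by
    rw [hφBdef]; fun_prop
  have hφA0 : φA 0 < 0 := by
    simp only [hφAdef, zero_mul, mul_zero, zero_sub, Real.exp_zero, mul_one]
    linarith [h1p]
  have hφB0 : φB 0 < 0 := by
    simp only [hφBdef, zero_mul, mul_zero, zero_sub, Real.exp_zero, mul_one]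
    linarith [h2p]
  obtain ⟨lam, hlam, hφAl, hφBl⟩ :
      ∃ lam : ℝ, 0 < lam ∧ φA lam < 0 ∧ φB lam < 0 := by
    have htend : Filter.Tendsto (fun l => max (φA l) (φB l)) (𝓝 0)
        (𝓝 (max (φA 0) (φB 0))) := ((hφAcont.max hφBcont).tendsto 0)
    have hev : ∀ᶠ l in 𝓝 0, max (φA l) (φB l) < 0 :=
      htend.eventually_lt_const (max_lt hφA0 hφB0)
    rw [Metric.eventually_nhds_iff] at hev
    obtain ⟨δ, hδ, hball⟩ := hev
    refine ⟨δ/2, by linarith, ?_, ?_⟩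
    · have := hball (y := δ/2) (by simp [Real.dist_eq]; rw [abs_of_pos (by linarith)]; linarith)
      exact lt_of_le_of_lt (le_max_left _ _) this
    · have := hball (y := δ/2) (by simp [Real.dist_eq]; rw [abs_of_pos (by linarith)]; linarith)
      exact lt_of_le_of_lt (le_max_right _ _) this
  -- growth constant
  set c : ℝ := a₁ + a₂ + a₁₂ * L₁ + a₂₁ * L₂ + 1 with hcdef
  have hc0 : 0 < c := by linarith [mul_nonneg ha₁₂.le hL₁, mul_nonneg ha₂₁.le hL₂]
  have hc1 : a₁ + a₁₂ * L₁ ≤ c := by linarith [mul_nonneg ha₂₁.le hL₂]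
  have hc2 : a₂ + a₂₁ * L₂ ≤ c := by linarith [mul_nonneg ha₁₂.le hL₁]
  set S : ℝ := max τ₁ τ₂ with hSdef
  set r : ℝ := max (max τ₁ τ₂) (max σ₁ σ₂) with hrdef
  have hS0 : 0 ≤ S := le_trans hτ₁ (le_max_left _ _)
  have hr0 : 0 ≤ r := le_trans hS0 (le_max_left _ _)
  have hτ₁S : τ₁ ≤ S := le_max_left _ _
  have hτ₂S : τ₂ ≤ S := le_max_right _ _
  have hτ₁r : τ₁ ≤ r := le_trans hτ₁S (le_max_left _ _)
  have hτ₂r : τ₂ ≤ r := le_trans hτ₂S (le_max_left _ _)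
  have hσ₁r : σ₁ ≤ r := le_trans (le_max_left σ₁ σ₂) (le_max_right _ _)
  have hσ₂r : σ₂ ≤ r := le_trans (le_max_right σ₁ σ₂) (le_max_right _ _)
  set M : ℝ := max p 1 * max (1/p) 1 * Real.exp ((c + lam) * S) with hMdef
  have hM : 0 < M := by positivity
  refine ⟨M, lam, hM, hlam, ?_⟩
  intro t₀ ht₀0 x y hcx hcy hix hiy hx hy t ht
  -- initial data bound
  set K : ℝ := sSup ((fun s => ‖(x s, y s)‖) '' Set.Icc (t₀ - r) t₀) with hKdef
  have hnorm : ∀ s : ℝ, ‖(x s, y s)‖ = max |x s| |y s| := by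
    intro s; rw [Prod.norm_def]; simp [Real.norm_eq_abs]
  have hbdd : BddAbove ((fun s => ‖(x s, y s)‖) '' Set.Icc (t₀ - r) t₀) :=
    ((isCompact_Icc).image (by fun_prop)).bddAbove
  have hK : ∀ s, t₀ - r ≤ s → s ≤ t₀ → max |x s| |y s| ≤ K := by
    intro s h1 h2
    rw [← hnorm s]
    exact le_csSup hbdd ⟨s, ⟨h1, h2⟩, rfl⟩
  have hK0 : 0 ≤ K := by
    have h := hK t₀ (by linarith) le_rfl
    have h2 := abs_nonneg (x t₀)
    have h3 := le_max_left |x t₀| |y t₀|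
    linarith
  have hcmax : Continuous fun u => max |x u| |y u| := hcx.abs.max hcy.abs
  -- Phase 1 : crude exponential growth bound
  have P1 : ∀ u, t₀ ≤ u → max |x u| |y u| ≤ K * Real.exp (c * (u - t₀)) := by
    intro u hu
    have key : ∀ ε : ℝ, 0 < ε → max |x u| |y u| ≤ (K + ε) * Real.exp (c * (u - t₀)) := by
      intro ε hε
      by_contra hcon
      push_neg at hcon
      set Es := {v : ℝ | t₀ ≤ v ∧ (K + ε) * Real.exp (c * (v - t₀)) ≤ max |x v| |y v|}
        with hEsdef
      have hne : Es.Nonempty := ⟨u, hu, hcon.le⟩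
      have hclosed : IsClosed Es := by
        have : Es = Set.Ici t₀ ∩ {v | (K + ε) * Real.exp (c * (v - t₀)) ≤ max |x v| |y v|} :=
          rfl
        rw [this]
        exact isClosed_Ici.inter (isClosed_le (by fun_prop) hcmax)
      have hbddb : BddBelow Es := ⟨t₀, fun v hv => hv.1⟩
      set T := sInf Es with hTdef
      have hTmem : T ∈ Es := hclosed.csInf_mem hne hbddb
      have hTt₀ : t₀ < T := by
        rcases lt_or_eq_of_le hTmem.1 with h | h
        · exact h
        · exfalso
          have h2 := hTmem.2
          rw [← h] at h2
          simp only [sub_self, mul_zero, Real.exp_zero, mul_one] at h2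
          have h3 := hK t₀ (by linarith) le_rfl
          linarith
      have hleT : ∀ v, t₀ ≤ v → v ≤ T →
          max |x v| |y v| ≤ (K + ε) * Real.exp (c * (v - t₀)) := by
        intro v h1 h2
        rcases eq_or_lt_of_le h2 with heq | h2'
        · rw [heq]
          have hcont2 : Continuous fun w =>
              (K + ε) * Real.exp (c * (w - t₀)) - max |x w| |y w| := by fun_prop
          have htd : Filter.Tendsto (fun w =>
              (K + ε) * Real.exp (c * (w - t₀)) - max |x w| |y w|) (𝓝[<] T)
              (𝓝 ((K + ε) * Real.exp (c * (T - t₀)) - max |x T| |y T|)) :=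
            (hcont2.tendsto T).mono_left nhdsWithin_le_nhds
          have hpos : ∀ᶠ w in 𝓝[<] T,
              0 ≤ (K + ε) * Real.exp (c * (w - t₀)) - max |x w| |y w| := by
            filter_upwards [Ioo_mem_nhdsLT_of_mem ⟨hTt₀, le_refl T⟩] with w hw
            have hwE : w ∉ Es := fun hmem => absurd (csInf_le hbddb hmem) (not_le.mpr hw.2)
            have hlt : ¬((K + ε) * Real.exp (c * (w - t₀)) ≤ max |x w| |y w|) :=
              fun hle => hwE ⟨hw.1.le, hle⟩
            linarith [lt_of_not_ge hlt]
          linarith [ge_of_tendsto htd hpos]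
        · have hvE : v ∉ Es := fun hmem => absurd (csInf_le hbddb hmem) (not_le.mpr h2')
          have hlt : ¬((K + ε) * Real.exp (c * (v - t₀)) ≤ max |x v| |y v|) :=
            fun hle => hvE ⟨h1, hle⟩
          linarith [lt_of_not_ge hlt]
      -- bound for shifted arguments
      have hshift : ∀ d : ℝ, 0 ≤ d → d ≤ r → ∀ s, t₀ ≤ s → s ≤ T →
          max |x (s - d)| |y (s - d)| ≤ (K + ε) * Real.exp (c * (s - t₀)) := by
        intro d hd0 hdr s h1 h2
        have hexp1 : (1:ℝ) ≤ Real.exp (c * (s - t₀)) :=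
          Real.one_le_exp (mul_nonneg hc0.le (by linarith))
        rcases le_or_gt t₀ (s - d) with h | h
        · have hb := hleT (s - d) h (by linarith)
          have hcd : 0 ≤ c * d := mul_nonneg hc0.le hd0
          have hexp2 : Real.exp (c * (s - d - t₀)) ≤ Real.exp (c * (s - t₀)) :=
            Real.exp_le_exp.mpr (by linarith [hcd])
          calc max |x (s - d)| |y (s - d)| ≤ (K + ε) * Real.exp (c * (s - d - t₀)) := hb
            _ ≤ (K + ε) * Real.exp (c * (s - t₀)) :=
                mul_le_mul_of_nonneg_left hexp2 (by linarith)
        · have hb := hK (s - d) (by linarith) h.le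
          calc max |x (s - d)| |y (s - d)| ≤ K := hb
            _ ≤ (K + ε) * 1 := by linarith
            _ ≤ (K + ε) * Real.exp (c * (s - t₀)) :=
                mul_le_mul_of_nonneg_left hexp1 (by linarith)
      -- the integral bound
      have hval : ∫ s in t₀..T, c * (K + ε) * Real.exp (c * (s - t₀))
          = (K + ε) * (Real.exp (c * (T - t₀)) - 1) := by
        have hder : ∀ s ∈ Set.uIcc t₀ T, HasDerivAt
            (fun w => (K + ε) * Real.exp (c * (w - t₀)))
            (c * (K + ε) * Real.exp (c * (s - t₀))) s := by
          intro s _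
          have h1 : HasDerivAt (fun w : ℝ => c * (w - t₀)) c s := by
            simpa using ((hasDerivAt_id s).sub_const t₀).const_mul c
          have h2 := h1.exp.const_mul (K + ε)
          exact h2.congr_deriv (by ring)
        rw [intervalIntegral.integral_eq_sub_of_hasDerivAt hder
          ((by fun_prop : Continuous fun s => c * (K + ε) * Real.exp (c * (s - t₀))).intervalIntegrable _ _)]
        rw [sub_self, mul_zero, Real.exp_zero]
        ring
      have hxbd : |x T| ≤ K + (K + ε) * (Real.exp (c * (T - t₀)) - 1) := by
        have hxid := hx T hTt₀.le
        have hFc : Continuous fun s => -a₁ * x (s - τ₁) + a₁₂ * f₁ (y (s - σ₁)) := by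
          fun_prop
        have habs := intervalIntegral.abs_integral_le_integral_abs (μ := volume)
          (f := fun s => -a₁ * x (s - τ₁) + a₁₂ * f₁ (y (s - σ₁))) hTt₀.le
        have hmono : ∫ s in t₀..T, |(-a₁ * x (s - τ₁) + a₁₂ * f₁ (y (s - σ₁)))|
            ≤ ∫ s in t₀..T, c * (K + ε) * Real.exp (c * (s - t₀)) := by
          apply intervalIntegral.integral_mono_on hTt₀.le
            (hFc.abs.intervalIntegrable _ _)
            ((by fun_prop : Continuous fun s => c * (K + ε) * Real.exp (c * (s - t₀))).intervalIntegrable _ _)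
          intro s hs
          obtain ⟨hs1, hs2⟩ := hs
          have hbx := hshift τ₁ hτ₁ hτ₁r s hs1 hs2
          have hby := hshift σ₁ hσ₁ hσ₁r s hs1 hs2
          have hx1 : |x (s - τ₁)| ≤ (K + ε) * Real.exp (c * (s - t₀)) :=
            le_trans (le_max_left _ _) hbx
          have hy1 : |y (s - σ₁)| ≤ (K + ε) * Real.exp (c * (s - t₀)) :=
            le_trans (le_max_right _ _) hby
          have hf1 : |f₁ (y (s - σ₁))| ≤ L₁ * |y (s - σ₁)| := hf₁ _
          have h1 : |(-a₁ * x (s - τ₁) + a₁₂ * f₁ (y (s - σ₁)))|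
              ≤ a₁ * |x (s - τ₁)| + a₁₂ * (L₁ * |y (s - σ₁)|) := by
            refine le_trans (abs_add_le _ _) ?_
            gcongr
            · rw [abs_mul, abs_neg, abs_of_pos ha₁]
            · rw [abs_mul, abs_of_pos ha₁₂]
              exact mul_le_mul_of_nonneg_left hf1 ha₁₂.le
          have hEp : 0 < Real.exp (c * (s - t₀)) := Real.exp_pos _
          have t1 := mul_le_mul_of_nonneg_left hx1 ha₁.le
          have t2 : a₁₂ * (L₁ * |y (s - σ₁)|) ≤
              a₁₂ * L₁ * ((K + ε) * Real.exp (c * (s - t₀))) := by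
            have := mul_le_mul_of_nonneg_left hy1 (mul_nonneg ha₁₂.le hL₁)
            linarith [this]
          have t3 : (a₁ + a₁₂ * L₁) * ((K + ε) * Real.exp (c * (s - t₀))) ≤
              c * ((K + ε) * Real.exp (c * (s - t₀))) :=
            mul_le_mul_of_nonneg_right hc1
              (mul_nonneg (by linarith) hEp.le)
          linarith [h1, t1, t2, t3]
        have hxt₀ : |x t₀| ≤ K := by
          have h := hK t₀ (by linarith) le_rfl
          linarith [le_max_left |x t₀| |y t₀|]
        calc |x T| = |x t₀ + ∫ s in t₀..T, (-a₁ * x (s - τ₁) + a₁₂ * f₁ (y (s - σ₁)))| := by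
              rw [← hxid]
          _ ≤ |x t₀| + |∫ s in t₀..T, (-a₁ * x (s - τ₁) + a₁₂ * f₁ (y (s - σ₁)))| :=
              abs_add_le _ _
          _ ≤ K + (K + ε) * (Real.exp (c * (T - t₀)) - 1) := by
              rw [← hval]
              exact add_le_add hxt₀ (le_trans habs hmono)
      have hybd : |y T| ≤ K + (K + ε) * (Real.exp (c * (T - t₀)) - 1) := by
        have hyid := hy T hTt₀.le
        have hFc : Continuous fun s => -a₂ * y (s - τ₂) + a₂₁ * f₂ (x (s - σ₂)) := by
          fun_prop
        have habs := intervalIntegral.abs_integral_le_integral_abs (μ := volume)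
          (f := fun s => -a₂ * y (s - τ₂) + a₂₁ * f₂ (x (s - σ₂))) hTt₀.le
        have hmono : ∫ s in t₀..T, |(-a₂ * y (s - τ₂) + a₂₁ * f₂ (x (s - σ₂)))|
            ≤ ∫ s in t₀..T, c * (K + ε) * Real.exp (c * (s - t₀)) := by
          apply intervalIntegral.integral_mono_on hTt₀.le
            (hFc.abs.intervalIntegrable _ _)
            ((by fun_prop : Continuous fun s => c * (K + ε) * Real.exp (c * (s - t₀))).intervalIntegrable _ _)
          intro s hs
          obtain ⟨hs1, hs2⟩ := hs
          have hby := hshift τ₂ hτ₂ hτ₂r s hs1 hs2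
          have hbx := hshift σ₂ hσ₂ hσ₂r s hs1 hs2
          have hy1 : |y (s - τ₂)| ≤ (K + ε) * Real.exp (c * (s - t₀)) :=
            le_trans (le_max_right _ _) hby
          have hx1 : |x (s - σ₂)| ≤ (K + ε) * Real.exp (c * (s - t₀)) :=
            le_trans (le_max_left _ _) hbx
          have hf2 : |f₂ (x (s - σ₂))| ≤ L₂ * |x (s - σ₂)| := hf₂ _
          have h1 : |(-a₂ * y (s - τ₂) + a₂₁ * f₂ (x (s - σ₂)))|
              ≤ a₂ * |y (s - τ₂)| + a₂₁ * (L₂ * |x (s - σ₂)|) := by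
            refine le_trans (abs_add_le _ _) ?_
            gcongr
            · rw [abs_mul, abs_neg, abs_of_pos ha₂]
            · rw [abs_mul, abs_of_pos ha₂₁]
              exact mul_le_mul_of_nonneg_left hf2 ha₂₁.le
          have hEp : 0 < Real.exp (c * (s - t₀)) := Real.exp_pos _
          have t1 := mul_le_mul_of_nonneg_left hy1 ha₂.le
          have t2 : a₂₁ * (L₂ * |x (s - σ₂)|) ≤
              a₂₁ * L₂ * ((K + ε) * Real.exp (c * (s - t₀))) := by
            have := mul_le_mul_of_nonneg_left hx1 (mul_nonneg ha₂₁.le hL₂)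
            linarith [this]
          have t3 : (a₂ + a₂₁ * L₂) * ((K + ε) * Real.exp (c * (s - t₀))) ≤
              c * ((K + ε) * Real.exp (c * (s - t₀))) :=
            mul_le_mul_of_nonneg_right hc2
              (mul_nonneg (by linarith) hEp.le)
          linarith [h1, t1, t2, t3]
        have hyt₀ : |y t₀| ≤ K := by
          have h := hK t₀ (by linarith) le_rfl
          linarith [le_max_right |x t₀| |y t₀|]
        calc |y T| = |y t₀ + ∫ s in t₀..T, (-a₂ * y (s - τ₂) + a₂₁ * f₂ (x (s - σ₂)))| := by
              rw [← hyid]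
          _ ≤ |y t₀| + |∫ s in t₀..T, (-a₂ * y (s - τ₂) + a₂₁ * f₂ (x (s - σ₂)))| :=
              abs_add_le _ _
          _ ≤ K + (K + ε) * (Real.exp (c * (T - t₀)) - 1) := by
              rw [← hval]
              exact add_le_add hyt₀ (le_trans habs hmono)
      have hTb := hTmem.2
      have hmaxb : max |x T| |y T| ≤ K + (K + ε) * (Real.exp (c * (T - t₀)) - 1) :=
        max_le hxbd hybd
      linarith
    have hEpos : 0 < Real.exp (c * (u - t₀)) := Real.exp_pos _
    refine le_of_forall_pos_le_add ?_
    intro δ hδ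
    have hk := key (δ / Real.exp (c * (u - t₀))) (by positivity)
    calc max |x u| |y u| ≤ (K + δ / Real.exp (c * (u - t₀))) * Real.exp (c * (u - t₀)) := hk
      _ = K * Real.exp (c * (u - t₀)) + δ := by field_simp
  -- Phase 2 : the Razumikhin-type argument
  set D : ℝ := max (1/p) 1 * Real.exp ((c + lam) * S) * K with hDdef
  have hD0 : 0 ≤ D := by
    apply mul_nonneg (mul_nonneg (by positivity) (Real.exp_nonneg _)) hK0
  set W : ℝ → ℝ := fun v => max (|x v| / p) (|y v|) with hWdef
  have hWcont : Continuous W := by rw [hWdef]; fun_prop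
  have hWfact : ∀ v, W v ≤ max (1/p) 1 * max |x v| |y v| := by
    intro v
    rw [hWdef]
    apply max_le
    · calc |x v| / p = (1/p) * |x v| := by ring
        _ ≤ max (1/p) 1 * max |x v| |y v| :=
            mul_le_mul (le_max_left _ _) (le_max_left _ _) (abs_nonneg _)
              (le_trans (by positivity) (le_max_left (1/p) 1))
    · calc |y v| = 1 * |y v| := (one_mul _).symm
        _ ≤ max (1/p) 1 * max |x v| |y v| :=
            mul_le_mul (le_max_right _ _) (le_max_right _ _) (abs_nonneg _)
              (le_trans (by positivity) (le_max_left (1/p) 1))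
  have hexpS1 : (1:ℝ) ≤ Real.exp ((c + lam) * S) :=
    Real.one_le_exp (mul_nonneg (by linarith) hS0)
  have hDK : max (1/p) 1 * K ≤ D := by
    rw [hDdef]
    have h0 : 0 ≤ max (1/p) 1 := by positivity
    have h1 : max (1/p) 1 * 1 * K ≤ max (1/p) 1 * Real.exp ((c + lam) * S) * K :=
      mul_le_mul_of_nonneg_right (mul_le_mul_of_nonneg_left hexpS1 h0) hK0
    linarith [h1]
  have hWlow : ∀ v, t₀ - r ≤ v → v ≤ t₀ → W v ≤ D * Real.exp (-(lam * (v - t₀))) := by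
    intro v h1 h2
    have hKv := hK v h1 h2
    have hexp : (1:ℝ) ≤ Real.exp (-(lam * (v - t₀))) := by
      apply Real.one_le_exp
      linarith [mul_nonneg hlam.le (show (0:ℝ) ≤ t₀ - v by linarith)]
    calc W v ≤ max (1/p) 1 * max |x v| |y v| := hWfact v
      _ ≤ max (1/p) 1 * K := mul_le_mul_of_nonneg_left hKv (by positivity)
      _ ≤ D := hDK
      _ = D * 1 := (mul_one D).symm
      _ ≤ D * Real.exp (-(lam * (v - t₀))) := mul_le_mul_of_nonneg_left hexp hD0
  have hWmid : ∀ v, t₀ ≤ v → v ≤ t₀ + S → W v ≤ D * Real.exp (-(lam * (v - t₀))) := by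
    intro v h1 h2
    have hP := P1 v h1
    have e1 : Real.exp (c * (v - t₀)) ≤
        Real.exp ((c + lam) * S) * Real.exp (-(lam * (v - t₀))) := by
      rw [← Real.exp_add]
      apply Real.exp_le_exp.mpr
      have h3 : 0 ≤ lam * (S - (v - t₀)) := mul_nonneg hlam.le (by linarith)
      have h4 : 0 ≤ c * (S - (v - t₀)) := mul_nonneg hc0.le (by linarith)
      linarith [h3, h4]
    calc W v ≤ max (1/p) 1 * max |x v| |y v| := hWfact v
      _ ≤ max (1/p) 1 * (K * Real.exp (c * (v - t₀))) :=
          mul_le_mul_of_nonneg_left hP (by positivity)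
      _ ≤ max (1/p) 1 * (K * (Real.exp ((c + lam) * S) * Real.exp (-(lam * (v - t₀))))) := by
          apply mul_le_mul_of_nonneg_left _ (by positivity)
          exact mul_le_mul_of_nonneg_left e1 hK0
      _ = D * Real.exp (-(lam * (v - t₀))) := by rw [hDdef]; ring
  have claim2 : ∀ ε : ℝ, 0 < ε → ∀ v, t₀ ≤ v →
      W v ≤ (D + ε) * Real.exp (-(lam * (v - t₀))) := by
    intro ε hε v hv
    by_contra hcon
    push_neg at hcon
    have hpε : 0 < D + ε := by linarith
    set Es := {w : ℝ | t₀ ≤ w ∧ (D + ε) * Real.exp (-(lam * (w - t₀))) ≤ W w} with hEsdef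
    have hne : Es.Nonempty := ⟨v, hv, hcon.le⟩
    have hclosed : IsClosed Es := by
      have : Es = Set.Ici t₀ ∩ {w | (D + ε) * Real.exp (-(lam * (w - t₀))) ≤ W w} := rfl
      rw [this]
      exact isClosed_Ici.inter (isClosed_le (by fun_prop) hWcont)
    have hbddb : BddBelow Es := ⟨t₀, fun w hw => hw.1⟩
    set T := sInf Es with hTdef
    have hTmem : T ∈ Es := hclosed.csInf_mem hne hbddb
    have hTS : t₀ + S < T := by
      by_contra hle
      push_neg at hle
      have h2 := hTmem.2
      have h3 := hWmid T hTmem.1 hle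
      have hE := Real.exp_pos (-(lam * (T - t₀)))
      have hprod := mul_pos hε hE
      linarith [h2, h3, hprod]
    have hTt₀ : t₀ < T := by linarith
    have hleT : ∀ w, t₀ ≤ w → w ≤ T →
        W w ≤ (D + ε) * Real.exp (-(lam * (w - t₀))) := by
      intro w h1 h2
      rcases eq_or_lt_of_le h2 with heq | h2'
      · rw [heq]
        have hcont2 : Continuous fun u =>
            (D + ε) * Real.exp (-(lam * (u - t₀))) - W u := by
          apply Continuous.sub _ hWcont
          fun_prop
        have htd : Filter.Tendsto (fun u =>
            (D + ε) * Real.exp (-(lam * (u - t₀))) - W u) (𝓝[<] T)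
            (𝓝 ((D + ε) * Real.exp (-(lam * (T - t₀))) - W T)) :=
          (hcont2.tendsto T).mono_left nhdsWithin_le_nhds
        have hpos : ∀ᶠ u in 𝓝[<] T,
            0 ≤ (D + ε) * Real.exp (-(lam * (u - t₀))) - W u := by
          filter_upwards [Ioo_mem_nhdsLT_of_mem ⟨hTt₀, le_refl T⟩] with u hu
          have huE : u ∉ Es := fun hmem => absurd (csInf_le hbddb hmem) (not_le.mpr hu.2)
          have hlt : ¬((D + ε) * Real.exp (-(lam * (u - t₀))) ≤ W u) :=
            fun hle => huE ⟨hu.1.le, hle⟩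
          linarith [lt_of_not_ge hlt]
        linarith [ge_of_tendsto htd hpos]
      · have hvE : w ∉ Es := fun hmem => absurd (csInf_le hbddb hmem) (not_le.mpr h2')
        have hlt : ¬((D + ε) * Real.exp (-(lam * (w - t₀))) ≤ W w) :=
          fun hle => hvE ⟨h1, hle⟩
        linarith [lt_of_not_ge hlt]
    have hWall : ∀ s, t₀ - r ≤ s → s ≤ T →
        W s ≤ (D + ε) * Real.exp (-(lam * (s - t₀))) := by
      intro s h1 h2
      rcases le_or_gt t₀ s with h | h
      · exact hleT s h h2
      · refine le_trans (hWlow s h1 h.le) ?_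
        exact mul_le_mul_of_nonneg_right (by linarith) (Real.exp_nonneg _)
    have hbx : ∀ s, t₀ - r ≤ s → s ≤ T →
        |x s| ≤ p * Real.exp (-(lam * (s - t₀))) * (D + ε) := by
      intro s h1 h2
      have h3 := hWall s h1 h2
      have h4 : |x s| / p ≤ W s := by rw [hWdef]; exact le_max_left _ _
      rw [div_le_iff₀ hp] at h4
      calc |x s| ≤ W s * p := h4
        _ ≤ ((D + ε) * Real.exp (-(lam * (s - t₀)))) * p :=
            mul_le_mul_of_nonneg_right h3 hp.le
        _ = p * Real.exp (-(lam * (s - t₀))) * (D + ε) := by ring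
    have hbyy : ∀ s, t₀ - r ≤ s → s ≤ T →
        |y s| ≤ 1 * Real.exp (-(lam * (s - t₀))) * (D + ε) := by
      intro s h1 h2
      have h3 := hWall s h1 h2
      have h4 : |y s| ≤ W s := by rw [hWdef]; exact le_max_right _ _
      calc |y s| ≤ W s := h4
        _ ≤ (D + ε) * Real.exp (-(lam * (s - t₀))) := h3
        _ = 1 * Real.exp (-(lam * (s - t₀))) * (D + ε) := by ring
    have hWT : W T = (D + ε) * Real.exp (-(lam * (T - t₀))) :=
      le_antisymm (hleT T hTt₀.le le_rfl) hTmem.2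
    have hWTmax : max (|x T| / p) (|y T|) = (D + ε) * Real.exp (-(lam * (T - t₀))) := by
      rw [← hWT, hWdef]
    rcases max_cases (|x T| / p) (|y T|) with ⟨hmx, _⟩ | ⟨hmy, _⟩
    · -- the x-component attains the bound
      have hxTval : |x T| = p * Real.exp (-(lam * (T - t₀))) * (D + ε) := by
        rw [hmx] at hWTmax
        rw [div_eq_iff hp.ne'] at hWTmax
        rw [hWTmax]; ring
      set ς : ℝ := if 0 ≤ x T then 1 else -1 with hςdef
      have hς1 : ς = 1 ∨ ς = -1 := by
        rw [hςdef]; split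
        · exact Or.inl rfl
        · exact Or.inr rfl
      have hςabs : ∀ z : ℝ, |ς * z| = |z| := by
        intro z; rcases hς1 with h | h <;> rw [h] <;> simp
      have hςxT : ς * x T = |x T| := by
        rw [hςdef]; split
        · rename_i h; rw [abs_of_nonneg h]; ring
        · rename_i h; rw [abs_of_neg (lt_of_not_ge h)]; ring
      have hmaxr : max τ₁ σ₁ ≤ r := max_le hτ₁r hσ₁r
      refine auxKey a₁ a₁₂ τ₁ σ₁ L₁ p 1 lam D ε t₀ T (fun w => ς * x w) y
        (fun w => ς * f₁ w) ha₁ hτ₁ hσ₁ hL₁ hp one_pos hlam hpε ha₁₂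
        ?_ (continuous_const.mul hcx) hcy (continuous_const.mul hf₁_cont)
        (by linarith [hτ₁S]) ?_ ?_ ?_ ?_ ?_
      · intro w
        rw [hςabs]
        exact hf₁ w
      · intro w hw
        have hxi := hx w hw
        calc ς * x w
            = ς * (x t₀ + ∫ s in t₀..w, (-a₁ * x (s - τ₁) + a₁₂ * f₁ (y (s - σ₁)))) := by
              rw [← hxi]
          _ = ς * x t₀ + ς * ∫ s in t₀..w, (-a₁ * x (s - τ₁) + a₁₂ * f₁ (y (s - σ₁))) := by
              ring
          _ = ς * x t₀ + ∫ s in t₀..w, ς * (-a₁ * x (s - τ₁) + a₁₂ * f₁ (y (s - σ₁))) := by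
              rw [intervalIntegral.integral_const_mul]
          _ = ς * x t₀ + ∫ s in t₀..w,
              (-a₁ * (ς * x (s - τ₁)) + a₁₂ * (ς * f₁ (y (s - σ₁)))) := by
              rw [intervalIntegral.integral_congr (g :=
                fun s => -a₁ * (ς * x (s - τ₁)) + a₁₂ * (ς * f₁ (y (s - σ₁))))
                (fun s _ => by ring)]
      · intro s h1 h2
        rw [hςabs]
        exact hbx s (by linarith) h2
      · intro s h1 h2
        exact hbyy s (by linarith) h2
      · rw [hςxT, hxTval]
      · have := hφAl
        rw [hφAdef] at this
        simp only at this
        linarith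
    · -- the y-component attains the bound
      have hyTval : |y T| = 1 * Real.exp (-(lam * (T - t₀))) * (D + ε) := by
        rw [hmy] at hWTmax
        rw [hWTmax]; ring
      set ς : ℝ := if 0 ≤ y T then 1 else -1 with hςdef
      have hς1 : ς = 1 ∨ ς = -1 := by
        rw [hςdef]; split
        · exact Or.inl rfl
        · exact Or.inr rfl
      have hςabs : ∀ z : ℝ, |ς * z| = |z| := by
        intro z; rcases hς1 with h | h <;> rw [h] <;> simp
      have hςyT : ς * y T = |y T| := by
        rw [hςdef]; split
        · rename_i h; rw [abs_of_nonneg h]; ring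
        · rename_i h; rw [abs_of_neg (lt_of_not_ge h)]; ring
      have hmaxr : max τ₂ σ₂ ≤ r := max_le hτ₂r hσ₂r
      refine auxKey a₂ a₂₁ τ₂ σ₂ L₂ 1 p lam D ε t₀ T (fun w => ς * y w) x
        (fun w => ς * f₂ w) ha₂ hτ₂ hσ₂ hL₂ one_pos hp hlam hpε ha₂₁
        ?_ (continuous_const.mul hcy) hcx (continuous_const.mul hf₂_cont)
        (by linarith [hτ₂S]) ?_ ?_ ?_ ?_ ?_
      · intro w
        rw [hςabs]
        exact hf₂ w
      · intro w hw
        have hyi := hy w hw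
        calc ς * y w
            = ς * (y t₀ + ∫ s in t₀..w, (-a₂ * y (s - τ₂) + a₂₁ * f₂ (x (s - σ₂)))) := by
              rw [← hyi]
          _ = ς * y t₀ + ς * ∫ s in t₀..w, (-a₂ * y (s - τ₂) + a₂₁ * f₂ (x (s - σ₂))) := by
              ring
          _ = ς * y t₀ + ∫ s in t₀..w, ς * (-a₂ * y (s - τ₂) + a₂₁ * f₂ (x (s - σ₂))) := by
              rw [intervalIntegral.integral_const_mul]
          _ = ς * y t₀ + ∫ s in t₀..w,
              (-a₂ * (ς * y (s - τ₂)) + a₂₁ * (ς * f₂ (x (s - σ₂)))) := by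
              rw [intervalIntegral.integral_congr (g :=
                fun s => -a₂ * (ς * y (s - τ₂)) + a₂₁ * (ς * f₂ (x (s - σ₂))))
                (fun s _ => by ring)]
      · intro s h1 h2
        rw [hςabs]
        have := hbyy s (by linarith) h2
        linarith
      · intro s h1 h2
        exact hbx s (by linarith) h2
      · rw [hςyT, hyTval]
      · have := hφBl
        rw [hφBdef] at this
        simp only at this
        linarith
  -- conclusion
  have P2 : ∀ v, t₀ ≤ v → W v ≤ D * Real.exp (-(lam * (v - t₀))) := by
    intro v hv
    have hEp : 0 < Real.exp (-(lam * (v - t₀))) := Real.exp_pos _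
    refine le_of_forall_pos_le_add ?_
    intro δ hδ
    have h := claim2 (δ / Real.exp (-(lam * (v - t₀)))) (by positivity) v hv
    calc W v ≤ (D + δ / Real.exp (-(lam * (v - t₀)))) * Real.exp (-(lam * (v - t₀))) := h
      _ = D * Real.exp (-(lam * (v - t₀))) + δ := by field_simp
  have hWt := P2 t ht
  have hW0 : 0 ≤ W t := by
    rw [hWdef]
    exact le_trans (abs_nonneg (y t)) (le_max_right _ _)
  have hfinal : max |x t| |y t| ≤ max p 1 * W t := by
    apply max_le
    · have h1 : |x t| = p * (|x t| / p) := by field_simp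
      rw [h1]
      apply mul_le_mul (le_max_left _ _) _ (by positivity) (by positivity)
      rw [hWdef]
      exact le_max_left _ _
    · calc |y t| = 1 * |y t| := (one_mul _).symm
        _ ≤ max p 1 * W t := by
            apply mul_le_mul (le_max_right _ _) _ (abs_nonneg _) (by positivity)
            rw [hWdef]
            exact le_max_right _ _
  have hnt₀ : 0 ≤ ‖(x t₀, y t₀)‖ := norm_nonneg _
  rw [hnorm t]
  calc max |x t| |y t| ≤ max p 1 * W t := hfinal
    _ ≤ max p 1 * (D * Real.exp (-(lam * (t - t₀)))) :=
        mul_le_mul_of_nonneg_left hWt (by positivity)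
    _ = M * Real.exp (-(lam * (t - t₀))) * K := by rw [hDdef, hMdef]; ring
    _ ≤ M * Real.exp (-(lam * (t - t₀))) * (‖(x t₀, y t₀)‖ + K) := by
        apply mul_le_mul_of_nonneg_left (by linarith) (by positivity)
    _ = M * Real.exp (-lam * (t - t₀)) * (‖(x t₀, y t₀)‖ + K) := by rw [neg_mul]
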